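/- Let m, p be positive integers, let l : Fin m → Fin p be a map, and let v ∈ ℂ^m be a nonzero vector. For g ∈ ℂ^p, let D_g denote the m×m diagonal matrix whose t-th diagonal entry is g(l(t)). Then the following are equivalent: (1) for almost every (g, h) ∈ ℂ^p × ℂ^p, the vectors D_g v and D_h v are linearly independent over ℂ; (2) there exist indices t₁, t₂ ∈ Fin m with v(t₁) ≠ 0, v(t₂) ≠ 0, and l(t₁) ≠ l(t₂), i.e., l is not constant on the support of v. -/
import Mathlib

open Matrix MeasureTheory

/-- The `m × m` diagonal matrix whose `t`-th diagonal entry is `g (l t)`. -/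
def patDiag {m p : ℕ} (l : Fin m → Fin p) (g : Fin p → ℂ) :
    Matrix (Fin m) (Fin m) ℂ :=
  Matrix.diagonal (g ∘ l)

lemma ker_volume_zero {p : ℕ} (φ : (Fin p → ℂ) →ₗ[ℂ] ℂ) (hφ : φ ≠ 0) :
    volume {x : Fin p → ℂ | φ x = 0} = 0 := by
  have h : (LinearMap.ker (φ.restrictScalars ℝ) : Submodule ℝ (Fin p → ℂ)) ≠ ⊤ := by
    intro h
    apply hφ
    refine LinearMap.ext fun x => ?_
    have : x ∈ LinearMap.ker (φ.restrictScalars ℝ) := h ▸ Submodule.mem_top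
    simpa using this
  exact Measure.addHaar_submodule (volume : Measure (Fin p → ℂ)) _ h

lemma ae_det_ne {p : ℕ} (a b : Fin p) (hab : a ≠ b) :
    ∀ᵐ gh : (Fin p → ℂ) × (Fin p → ℂ), gh.1 a * gh.2 b ≠ gh.1 b * gh.2 a := by
  rw [ae_iff]
  have hmeas : MeasurableSet {gh : (Fin p → ℂ) × (Fin p → ℂ) |
      gh.1 a * gh.2 b = gh.1 b * gh.2 a} := by
    apply measurableSet_eq_fun <;> fun_prop
  have : {gh : (Fin p → ℂ) × (Fin p → ℂ) | ¬ gh.1 a * gh.2 b ≠ gh.1 b * gh.2 a}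
      = {gh | gh.1 a * gh.2 b = gh.1 b * gh.2 a} := by
    ext gh; simp
  rw [this, Measure.volume_eq_prod, Measure.measure_prod_null hmeas]
  have hg0 : ∀ᵐ g : Fin p → ℂ, g a ≠ 0 := by
    rw [ae_iff]
    have : {g : Fin p → ℂ | ¬ g a ≠ 0} = {g | (LinearMap.proj a : (Fin p → ℂ) →ₗ[ℂ] ℂ) g = 0} := by
      ext g; simp
    rw [this]
    apply ker_volume_zero
    intro h
    have := LinearMap.congr_fun h (fun _ => (1:ℂ))
    simpa using this
  filter_upwards [hg0] with g hg
  have : (Prod.mk g ⁻¹' {gh : (Fin p → ℂ) × (Fin p → ℂ) | gh.1 a * gh.2 b = gh.1 b * gh.2 a})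
      = {h : Fin p → ℂ | (g a • (LinearMap.proj b : (Fin p → ℂ) →ₗ[ℂ] ℂ)
          - g b • (LinearMap.proj a : (Fin p → ℂ) →ₗ[ℂ] ℂ)) h = 0} := by
    ext h
    simp [sub_eq_zero, mul_comm]
  show volume _ = 0
  rw [this]
  apply ker_volume_zero
  intro h
  have := LinearMap.congr_fun h (Pi.single b 1)
  simp [Pi.single_apply, hab, Ne.symm hab] at this
  exact hg this

theorem stmt7 (m p : ℕ) (hm : 0 < m) (hp : 0 < p)
    (l : Fin m → Fin p) (v : Fin m → ℂ) (hv : v ≠ 0) :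
    (∀ᵐ gh : (Fin p → ℂ) × (Fin p → ℂ),
        LinearIndependent ℂ ![(patDiag l gh.1).mulVec v, (patDiag l gh.2).mulVec v]) ↔
      ∃ t₁ t₂ : Fin m, v t₁ ≠ 0 ∧ v t₂ ≠ 0 ∧ l t₁ ≠ l t₂ := by
  constructor
  · intro hae
    by_contra hcon
    push_neg at hcon
    obtain ⟨t₀, ht₀⟩ := Function.ne_iff.mp hv
    simp only [Pi.zero_apply] at ht₀
    -- for every gh the family is dependent
    have hdep : ∀ gh : (Fin p → ℂ) × (Fin p → ℂ),
        ¬ LinearIndependent ℂ ![(patDiag l gh.1).mulVec v, (patDiag l gh.2).mulVec v] := by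
      intro gh hli
      have hx : (patDiag l gh.1).mulVec v = gh.1 (l t₀) • v := by
        funext t
        simp only [patDiag, Matrix.mulVec_diagonal, Function.comp_apply, Pi.smul_apply,
          smul_eq_mul]
        by_cases hvt : v t = 0
        · simp [hvt]
        · rw [hcon t t₀ hvt ht₀]
      have hy : (patDiag l gh.2).mulVec v = gh.2 (l t₀) • v := by
        funext t
        simp only [patDiag, Matrix.mulVec_diagonal, Function.comp_apply, Pi.smul_apply,
          smul_eq_mul]
        by_cases hvt : v t = 0
        · simp [hvt]
        · rw [hcon t t₀ hvt ht₀]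
      rw [hx, hy] at hli
      set c := gh.1 (l t₀); set d := gh.2 (l t₀)
      have h0 := LinearIndependent.pair_iff.mp hli d (-c) (by
        rw [smul_smul, smul_smul]; ring_nf; rw [mul_comm]; ring_nf; module)
      have hne := hli.ne_zero 0
      simp only [Matrix.cons_val_zero] at hne
      have hc : c = 0 := by simpa using h0.2
      rw [hc] at hne
      simp at hne
    have : ∀ᵐ gh : (Fin p → ℂ) × (Fin p → ℂ), False := by
      filter_upwards [hae] with gh h using hdep gh h
    have hne : (volume : Measure ((Fin p → ℂ) × (Fin p → ℂ))) ≠ 0 := by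
      rw [← Measure.measure_univ_ne_zero]
      rw [Measure.volume_eq_prod, ← Set.univ_prod_univ, Measure.prod_prod]
      exact mul_ne_zero
        (isOpen_univ.measure_ne_zero volume Set.univ_nonempty)
        (isOpen_univ.measure_ne_zero volume Set.univ_nonempty)
    have : (ae (volume : Measure ((Fin p → ℂ) × (Fin p → ℂ)))).NeBot := ae_neBot.mpr hne
    exact this.ne (by simpa [Filter.eventually_false_iff_eq_bot] using ‹∀ᵐ gh : (Fin p → ℂ) × (Fin p → ℂ), False›)
  · rintro ⟨t₁, t₂, hv1, hv2, hl⟩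
    filter_upwards [ae_det_ne (l t₁) (l t₂) hl] with gh hgh
    set g := gh.1; set h := gh.2
    rw [LinearIndependent.pair_iff]
    intro s t hst
    have e1 : s * g (l t₁) + t * h (l t₁) = 0 := by
      have := congr_fun hst t₁
      simp only [patDiag, Pi.add_apply, Pi.smul_apply, Matrix.mulVec_diagonal,
        Function.comp_apply, smul_eq_mul, Pi.zero_apply] at this
      have h2 : (s * g (l t₁) + t * h (l t₁)) * v t₁ = 0 := by ring_nf; ring_nf at this; linear_combination this
      exact (mul_eq_zero.mp h2).resolve_right hv1
    have e2 : s * g (l t₂) + t * h (l t₂) = 0 := by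
      have := congr_fun hst t₂
      simp only [patDiag, Pi.add_apply, Pi.smul_apply, Matrix.mulVec_diagonal,
        Function.comp_apply, smul_eq_mul, Pi.zero_apply] at this
      have h2 : (s * g (l t₂) + t * h (l t₂)) * v t₂ = 0 := by ring_nf; ring_nf at this; linear_combination this
      exact (mul_eq_zero.mp h2).resolve_right hv2
    have hs : s * (g (l t₁) * h (l t₂) - g (l t₂) * h (l t₁)) = 0 := by
      linear_combination h (l t₂) * e1 - h (l t₁) * e2
    have ht : t * (g (l t₁) * h (l t₂) - g (l t₂) * h (l t₁)) = 0 := by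
      linear_combination g (l t₁) * e2 - g (l t₂) * e1
    have hd : g (l t₁) * h (l t₂) - g (l t₂) * h (l t₁) ≠ 0 := sub_ne_zero.mpr hgh
    exact ⟨(mul_eq_zero.mp hs).resolve_right hd, (mul_eq_zero.mp ht).resolve_right hd⟩
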